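/- Let 𝒢_k be the quotient of the group algebra ℚ[G̃_m] by the two-sided ideal generated by all products ∏_{j=1}^{k+1}((a'_{n_j})² - 1) for arbitrary tuples (n_1, …, n_{k+1}) with each n_j ∈ {0, …, m-1}. Then in 𝒢_k, every element of the form α_1·A_1·α_2·A_2···α_{k+1}·A_{k+1}·α_{k+2} is zero, where each α_t ∈ G̃_m and each A_t = (u_t - u_t⁻¹) with u_t one of the generators a'_i or a''_i (i < m). -/

import Mathlib

open FreeGroup

/-- Generators of the groups `G_m` and `G̃_m`: `.inl (i, false)` is `a'_i`,
`.inl (i, true)` is `a''_i`, and `.inr ()` is `a_m`. -/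
abbrev Gen (m : ℕ) := (Fin m × Bool) ⊕ Unit

/-- The defining relators of the group `G̃_m`. -/
def Gt.rels (m : ℕ) : Set (FreeGroup (Gen m)) :=
  {w | w = of (.inr ()) * of (.inr ())
    ∨ (∃ i : Fin m, w = (of (.inl (i, false)))^2 * ((of (.inl (i, true)))^2)⁻¹)
    ∨ (∃ i j : Fin m, i < j ∧
        (w = of (.inl (i, false)) * of (.inl (j, false)) *
             (of (.inl (j, false)) * of (.inl (i, true)))⁻¹
       ∨ w = of (.inl (i, false)) * of (.inl (j, true)) *
             (of (.inl (j, true)) * of (.inl (i, true)))⁻¹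
       ∨ w = of (.inl (j, false)) * of (.inl (i, false)) *
             (of (.inl (i, true)) * of (.inl (j, false)))⁻¹
       ∨ w = of (.inl (j, true)) * of (.inl (i, false)) *
             (of (.inl (i, true)) * of (.inl (j, true)))⁻¹))
    ∨ (∃ i : Fin m, w = of (.inl (i, false)) * of (.inr ()) *
             (of (.inr ()) * of (.inl (i, true)))⁻¹)}

/-- The group `G̃_m`. -/
abbrev Gt (m : ℕ) := PresentedGroup (Gt.rels m)

def Gt.a' {m : ℕ} (i : Fin m) : Gt m := PresentedGroup.of (.inl (i, false))
def Gt.a'' {m : ℕ} (i : Fin m) : Gt m := PresentedGroup.of (.inl (i, true))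
def Gt.am (m : ℕ) : Gt m := PresentedGroup.of (.inr ())

/-- The canonical embedding of `G̃_m` into its rational group algebra. -/
noncomputable def ι (m : ℕ) : Gt m →* MonoidAlgebra ℚ (Gt m) :=
  (MonoidAlgebra.of ℚ (Gt m))

/-- The generator of `G̃_m` corresponding to `a'_i` (`snd = false`) or
`a''_i` (`snd = true`). -/
def gen {m : ℕ} (g : Fin m × Bool) : Gt m := PresentedGroup.of (.inl g)

/-- The element `u - u⁻¹` of `ℚ[G̃_m]` for a generator `u = a'_i` or `a''_i`. -/
noncomputable def D {m : ℕ} (g : Fin m × Bool) : MonoidAlgebra ℚ (Gt m) :=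
  ι m (gen g) - ι m (gen g)⁻¹

/-- The generating set of the two-sided ideal defining the quotient `𝒢_k`:
all products `∏_{j=1}^{k+1} ((a'_{n_j})² - 1)`. -/
noncomputable def idealGens (m k : ℕ) : Set (MonoidAlgebra ℚ (Gt m)) :=
  {x | ∃ n : Fin (k + 1) → Fin m,
    x = (List.ofFn fun j : Fin (k + 1) => ι m (gen (n j, false)) ^ 2 - 1).prod}


section Aux

variable {m : ℕ}

private lemma rel_one {r : FreeGroup (Gen m)} (hr : r ∈ Gt.rels m) :
    PresentedGroup.mk (Gt.rels m) r = 1 :=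
  (QuotientGroup.eq_one_iff _).mpr (Subgroup.subset_normalClosure hr)

private lemma rel_eq {a b : FreeGroup (Gen m)} (h : a * b⁻¹ ∈ Gt.rels m) :
    PresentedGroup.mk (Gt.rels m) a = PresentedGroup.mk (Gt.rels m) b := by
  have := rel_one h
  rw [_root_.map_mul, _root_.map_inv, mul_inv_eq_one] at this
  exact this

private lemma hsq (i : Fin m) : gen (i, false) * gen (i, false) = gen (i, true) * gen (i, true) := by
  have : ((of (.inl (i, false)) : FreeGroup (Gen m)))^2 * ((of (.inl (i, true)))^2)⁻¹ ∈ Gt.rels m :=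
    Or.inr (Or.inl ⟨i, rfl⟩)
  have h := rel_eq this
  simpa [gen, map_pow, PresentedGroup.of, sq] using h

private lemma r1 {i j : Fin m} (h : i < j) :
    gen (i, false) * gen (j, false) = gen (j, false) * gen (i, true) := by
  have := rel_eq (a := of (.inl (i, false)) * of (.inl (j, false)))
    (b := of (.inl (j, false)) * of (.inl (i, true)))
    (Or.inr (Or.inr (Or.inl ⟨i, j, h, Or.inl rfl⟩)))
  simpa [gen, PresentedGroup.of] using this

private lemma r2 {i j : Fin m} (h : i < j) :
    gen (i, false) * gen (j, true) = gen (j, true) * gen (i, true) := by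
  have := rel_eq (a := of (.inl (i, false)) * of (.inl (j, true)))
    (b := of (.inl (j, true)) * of (.inl (i, true)))
    (Or.inr (Or.inr (Or.inl ⟨i, j, h, Or.inr (Or.inl rfl)⟩)))
  simpa [gen, PresentedGroup.of] using this

private lemma r3 {i j : Fin m} (h : i < j) :
    gen (j, false) * gen (i, false) = gen (i, true) * gen (j, false) := by
  have := rel_eq (a := of (.inl (j, false)) * of (.inl (i, false)))
    (b := of (.inl (i, true)) * of (.inl (j, false)))
    (Or.inr (Or.inr (Or.inl ⟨i, j, h, Or.inr (Or.inr (Or.inl rfl))⟩)))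
  simpa [gen, PresentedGroup.of] using this

private lemma r5 (i : Fin m) :
    gen (i, false) * Gt.am m = Gt.am m * gen (i, true) := by
  have := rel_eq (a := of (.inl (i, false)) * of (.inr ()))
    (b := of (.inr ()) * of (.inl (i, true)))
    (Or.inr (Or.inr (Or.inr ⟨i, rfl⟩)))
  simpa [gen, Gt.am, PresentedGroup.of] using this

private lemma central (i : Fin m) (g : Gt m) :
    gen (i, false) * gen (i, false) * g = g * (gen (i, false) * gen (i, false)) := by
  have := PresentedGroup.generated_by (Gt.rels m)
    (Subgroup.centralizer {gen (i, false) * gen (i, false)}) ?_ g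
  · exact Subgroup.mem_centralizer_iff.mp this _ rfl
  intro x
  rw [Subgroup.mem_centralizer_iff]
  rintro h rfl
  set A := gen (i, false) with hA
  match x with
  | Sum.inr () =>
    show A * A * Gt.am m = Gt.am m * (A * A)
    calc A * A * Gt.am m = A * (A * Gt.am m) := by rw [mul_assoc]
      _ = A * (Gt.am m * gen (i, true)) := by rw [r5]
      _ = (A * Gt.am m) * gen (i, true) := by rw [mul_assoc]
      _ = Gt.am m * gen (i, true) * gen (i, true) := by rw [r5]
      _ = Gt.am m * (gen (i, true) * gen (i, true)) := by rw [mul_assoc]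
      _ = Gt.am m * (A * A) := by rw [← hsq]
  | Sum.inl (j, b) =>
    show A * A * PresentedGroup.of (Sum.inl (j, b)) = PresentedGroup.of (Sum.inl (j, b)) * (A * A)
    have hg : (PresentedGroup.of (Sum.inl (j, b)) : Gt m) = gen (j, b) := rfl
    rw [hg]
    rcases lt_trichotomy i j with hij | hij | hij
    · cases b with
      | false =>
        calc A * A * gen (j, false) = A * (A * gen (j, false)) := by rw [mul_assoc]
          _ = A * (gen (j, false) * gen (i, true)) := by rw [r1 hij]
          _ = (A * gen (j, false)) * gen (i, true) := by rw [mul_assoc]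
          _ = gen (j, false) * gen (i, true) * gen (i, true) := by rw [r1 hij]
          _ = gen (j, false) * (gen (i, true) * gen (i, true)) := by rw [mul_assoc]
          _ = gen (j, false) * (A * A) := by rw [← hsq]
      | true =>
        calc A * A * gen (j, true) = A * (A * gen (j, true)) := by rw [mul_assoc]
          _ = A * (gen (j, true) * gen (i, true)) := by rw [r2 hij]
          _ = (A * gen (j, true)) * gen (i, true) := by rw [mul_assoc]
          _ = gen (j, true) * gen (i, true) * gen (i, true) := by rw [r2 hij]
          _ = gen (j, true) * (gen (i, true) * gen (i, true)) := by rw [mul_assoc]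
          _ = gen (j, true) * (A * A) := by rw [← hsq]
    · subst hij
      cases b with
      | false => rw [← hA]; group
      | true =>
        calc A * A * gen (i, true) = gen (i, true) * gen (i, true) * gen (i, true) := by rw [hsq]
          _ = gen (i, true) * (gen (i, true) * gen (i, true)) := by rw [mul_assoc]
          _ = gen (i, true) * (A * A) := by rw [← hsq]
    · -- j < i
      have h1 : gen (j, false) * A = A * gen (j, true) := r1 hij
      have h3 : A * gen (j, false) = gen (j, true) * A := r3 hij
      cases b with
      | false =>
        calc A * A * gen (j, false) = A * (A * gen (j, false)) := by rw [mul_assoc]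
          _ = A * (gen (j, true) * A) := by rw [h3]
          _ = (A * gen (j, true)) * A := by rw [mul_assoc]
          _ = (gen (j, false) * A) * A := by rw [← h1]
          _ = gen (j, false) * (A * A) := by rw [mul_assoc]
      | true =>
        calc A * A * gen (j, true) = A * (A * gen (j, true)) := by rw [mul_assoc]
          _ = A * (gen (j, false) * A) := by rw [← h1]
          _ = (A * gen (j, false)) * A := by rw [mul_assoc]
          _ = (gen (j, true) * A) * A := by rw [h3]
          _ = gen (j, true) * (A * A) := by rw [mul_assoc]

/-- The central element `(a'_i)² - 1` of `ℚ[G̃_m]`. -/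
private noncomputable def X {m : ℕ} (i : Fin m) : MonoidAlgebra ℚ (Gt m) :=
  ι m (gen (i, false)) ^ 2 - 1

private lemma Xcentral (i : Fin m) (y : MonoidAlgebra ℚ (Gt m)) : X i * y = y * X i := by
  induction y using MonoidAlgebra.induction_on with
  | of g =>
    have hc : gen (i, false) ^ 2 * g = g * gen (i, false) ^ 2 := by
      rw [sq]; exact central i g
    have : ι m (gen (i, false) ^ 2) * ι m g = ι m g * ι m (gen (i, false) ^ 2) := by
      rw [← _root_.map_mul, hc, _root_.map_mul]
    have hι : (MonoidAlgebra.of ℚ (Gt m)) g = ι m g := rfl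
    simp only [X, hι, sub_mul, mul_sub, one_mul, mul_one, ← _root_.map_pow, this]
  | add f g hf hg => rw [mul_add, add_mul, hf, hg]
  | smul r f hf => rw [mul_smul_comm, smul_mul_assoc, hf]

private lemma Dfact (g : Fin m × Bool) : D g = ι m (gen g)⁻¹ * X g.1 := by
  have hsq' : gen (g.1, false) ^ 2 = gen g ^ 2 := by
    obtain ⟨i, b⟩ := g
    cases b with
    | false => rfl
    | true => simp only [sq]; exact hsq i
  rw [D, X, ← _root_.map_pow, hsq', _root_.map_pow, mul_sub, mul_one, sq, ← mul_assoc,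
    ← _root_.map_mul, inv_mul_cancel, _root_.map_one, one_mul]

private lemma key (L : List (Gt m × (Fin m × Bool))) :
    ∃ g : Gt m, (L.map fun p => ι m p.1 * D p.2).prod
      = ι m g * (L.map fun p => X p.2.1).prod := by
  induction L with
  | nil => exact ⟨1, by simp⟩
  | cons p L ih =>
    obtain ⟨g, hg⟩ := ih
    refine ⟨p.1 * (gen p.2)⁻¹ * g, ?_⟩
    have hX : X p.2.1 * (ι m g * (L.map fun p => X p.2.1).prod)
        = ι m g * (X p.2.1 * (L.map fun p => X p.2.1).prod) := by
      rw [← mul_assoc, Xcentral, mul_assoc]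
    calc ((p :: L).map fun p => ι m p.1 * D p.2).prod
        = ι m p.1 * D p.2 * (L.map fun p => ι m p.1 * D p.2).prod := by
          rw [List.map_cons, List.prod_cons]
      _ = ι m p.1 * (ι m (gen p.2)⁻¹ * X p.2.1) * (ι m g * (L.map fun p => X p.2.1).prod) := by
          rw [Dfact, hg]
      _ = ι m p.1 * ι m (gen p.2)⁻¹ * (X p.2.1 * (ι m g * (L.map fun p => X p.2.1).prod)) := by
          simp only [mul_assoc]
      _ = ι m p.1 * ι m (gen p.2)⁻¹ * (ι m g * (X p.2.1 * (L.map fun p => X p.2.1).prod)) := by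
          rw [hX]
      _ = ι m (p.1 * (gen p.2)⁻¹ * g) * ((p :: L).map fun p => X p.2.1).prod := by
          rw [List.map_cons, List.prod_cons, _root_.map_mul, _root_.map_mul]
          simp only [mul_assoc]

end Aux

/-- In the quotient `𝒢_k` of `ℚ[G̃_m]` by the two-sided ideal generated by the
products `∏_{j=1}^{k+1}((a'_{n_j})² - 1)`, every element of the form
`α_1·A_1·α_2·A_2 ··· α_{k+1}·A_{k+1}·α_{k+2}` with `α_t ∈ G̃_m` and
`A_t = u_t - u_t⁻¹` (`u_t` a generator `a'_i` or `a''_i`) vanishes; i.e. every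
such element of `ℚ[G̃_m]` lies in the ideal. -/
theorem stmt_11 (m k : ℕ) (α : Fin (k + 2) → Gt m)
    (u : Fin (k + 1) → Fin m × Bool) :
    (List.ofFn fun t : Fin (k + 1) =>
        ι m (α t.castSucc) * D (u t)).prod * ι m (α (Fin.last (k + 1))) ∈
      TwoSidedIdeal.span (idealGens m k) := by
  obtain ⟨g, hg⟩ := key (List.ofFn fun t : Fin (k + 1) => (α t.castSucc, u t))
  simp only [List.map_ofFn, Function.comp_def] at hg
  rw [hg]
  exact TwoSidedIdeal.mul_mem_right _ _ _ (TwoSidedIdeal.mul_mem_left _ _ _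
    (TwoSidedIdeal.subset_span ⟨fun j => (u j).1, rfl⟩))
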